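/- Let W be a k-vector space. Then: (i) the formula (x·f)(h) = f(S(x⁽²⁾) h x⁽¹⁾) defines a left H-module structure on Hom_k(H, W); (ii) this module is stable for the contraaction α(Φ)(h) = Φ(h⁽¹⁾)(h⁽²⁾), i.e. for every f ∈ Hom_k(H, W) one has α(h ↦ h·f) = f. -/

import Mathlib

/-!
# Statement 11

`k` a field, `H` a Hopf algebra over `k`, `W` a `k`-vector space.  Then
(i) `(x · f)(h) = f (S(x⁽²⁾) h x⁽¹⁾)` defines a left `H`-module structure on `Hom_k(H, W)`;
(ii) this module is stable for the contraaction `α(Φ)(h) = Φ(h⁽¹⁾)(h⁽²⁾)`: for every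
`f ∈ Hom_k(H, W)` one has `α (h ↦ h · f) = f`.
-/

open TensorProduct

noncomputable section

variable (k : Type) [Field k]
variable (H : Type) [Ring H] [HopfAlgebra k H]

/-- `H ⊗ H →ₗ End_k(H)`, `u ⊗ v ↦ (x ↦ u * x * v)`. -/
def sandwich : H ⊗[k] H →ₗ[k] (H →ₗ[k] H) :=
  (TensorProduct.lift (LinearMap.llcomp k H H H)) ∘ₗ
    (TensorProduct.map (LinearMap.mul k H) (LinearMap.mul k H).flip)

/-- `H ⊗ H →ₗ End_k(Hom_k(H, W))`, `u ⊗ v ↦ (φ ↦ (x ↦ φ (u * x * v)))`. -/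
def sandwichHom (W : Type) [AddCommGroup W] [Module k W] :
    H ⊗[k] H →ₗ[k] (H →ₗ[k] W) →ₗ[k] (H →ₗ[k] W) :=
  (LinearMap.llcomp k H H W).flip ∘ₗ sandwich k H

variable (W : Type) [AddCommGroup W] [Module k W]

/-- The action `H →ₗ End_k(Hom_k(H, W))`: `(x · f)(h) = f (S(x⁽²⁾) h x⁽¹⁾)`. -/
def hActW : H →ₗ[k] (H →ₗ[k] W) →ₗ[k] (H →ₗ[k] W) :=
  (sandwichHom k H W) ∘ₗ
    (LinearMap.rTensor H (HopfAlgebra.antipode (R := k))) ∘ₗ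
    (TensorProduct.comm k H H).toLinearMap ∘ₗ (Coalgebra.comul (R := k))

/-- Evaluation `Hom_k(H, W) ⊗ H →ₗ W`. -/
def evalMap : (H →ₗ[k] W) ⊗[k] H →ₗ[k] W := TensorProduct.lift LinearMap.id

/-- The contraaction `α : Hom_k(H, Hom_k(H, W)) →ₗ Hom_k(H, W)`, `α(Φ)(h) = Φ(h⁽¹⁾)(h⁽²⁾)`. -/
def contra : (H →ₗ[k] (H →ₗ[k] W)) →ₗ[k] (H →ₗ[k] W) :=
  (LinearMap.lcomp k W (Coalgebra.comul (R := k) (A := H))) ∘ₗ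
    (LinearMap.llcomp k (H ⊗[k] H) ((H →ₗ[k] W) ⊗[k] H) W (evalMap k H W)) ∘ₗ
    (LinearMap.rTensorHom (M := H) (N := H) (P := H →ₗ[k] W))

end

open TensorProduct Coalgebra HopfAlgebra

noncomputable section
namespace Stmt11Aux

variable (k : Type) [Field k]
variable {C : Type} [AddCommGroup C] [Module k C] [Coalgebra k C]
variable {A : Type} [Ring A] [Algebra k A]

variable (k : Type) [Field k]
variable {C : Type} [AddCommGroup C] [Module k C] [Coalgebra k C]
variable {A : Type} [Ring A] [Algebra k A]

/-- Convolution product on `Hom_k(C, A)`. -/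
def conv (f g : C →ₗ[k] A) : C →ₗ[k] A :=
  LinearMap.mul' k A ∘ₗ TensorProduct.map f g ∘ₗ Coalgebra.comul

/-- Convolution unit. -/
def convOne : C →ₗ[k] A := Algebra.linearMap k A ∘ₗ Coalgebra.counit

lemma conv_apply {ι : Type*} (f g : C →ₗ[k] A) (c : C) (r : Coalgebra.Repr k c ι) :
    conv k f g c = ∑ i ∈ r.index, f (r.left i) * g (r.right i) := by
  simp only [conv, LinearMap.comp_apply]
  rw [← r.eq]
  simp [map_sum]

lemma smul_sum_eq {ι : Type*} (c : C) (r : Coalgebra.Repr k c ι) :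
    ∑ i ∈ r.index, counit (R := k) (r.left i) • r.right i = c := by
  have := congrArg (TensorProduct.lid k C) (Coalgebra.sum_counit_tmul_eq r)
  simp only [map_sum, TensorProduct.lid_tmul, one_smul] at this
  exact this

lemma sum_smul_eq {ι : Type*} (c : C) (r : Coalgebra.Repr k c ι) :
    ∑ i ∈ r.index, counit (R := k) (r.right i) • r.left i = c := by
  have := congrArg (TensorProduct.rid k C) (Coalgebra.sum_tmul_counit_eq r)
  simp only [map_sum, TensorProduct.rid_tmul, one_smul] at this
  exact this

lemma conv_one_left (f : C →ₗ[k] A) : conv k (convOne k) f = f := by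
  ext c
  have r := Coalgebra.Repr.arbitrary k c
  rw [conv_apply k _ _ c r]
  calc ∑ i ∈ r.index, convOne k (r.left i) * f (r.right i)
      = ∑ i ∈ r.index, counit (R := k) (r.left i) • f (r.right i) := by
        simp [convOne, Algebra.smul_def]
    _ = f (∑ i ∈ r.index, counit (R := k) (r.left i) • r.right i) := by
        simp [map_sum]
    _ = f c := by rw [smul_sum_eq]

lemma conv_one_right (f : C →ₗ[k] A) : conv k f (convOne k) = f := by
  ext c
  have r := Coalgebra.Repr.arbitrary k c
  rw [conv_apply k _ _ c r]
  calc ∑ i ∈ r.index, f (r.left i) * convOne k (r.right i)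
      = ∑ i ∈ r.index, counit (R := k) (r.right i) • f (r.left i) := by
        simp only [convOne, LinearMap.comp_apply, Algebra.linearMap_apply]
        refine Finset.sum_congr rfl fun i _ => ?_
        rw [← Algebra.commutes, Algebra.smul_def]
    _ = f (∑ i ∈ r.index, counit (R := k) (r.right i) • r.left i) := by
        simp [map_sum]
    _ = f c := by rw [sum_smul_eq]

lemma conv_assoc (f g h : C →ₗ[k] A) :
    conv k (conv k f g) h = conv k f (conv k g h) := by
  ext c
  have r := Coalgebra.Repr.arbitrary k c
  set t : (i : C × C) → Coalgebra.Repr k (r.left i) (C × C) := fun i => Coalgebra.Repr.arbitrary k _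
  set s : (i : C × C) → Coalgebra.Repr k (r.right i) (C × C) := fun i => Coalgebra.Repr.arbitrary k _
  have key := Coalgebra.sum_tmul_tmul_eq (R := k) r t s
  set Ψ : C ⊗[k] (C ⊗[k] C) →ₗ[k] A :=
    LinearMap.mul' k A ∘ₗ TensorProduct.map f (LinearMap.mul' k A ∘ₗ TensorProduct.map g h)
    with hΨ
  have key2 := congrArg Ψ key
  simp only [map_sum, hΨ, LinearMap.comp_apply, TensorProduct.map_tmul,
    LinearMap.mul'_apply] at key2
  rw [conv_apply k _ _ c r, conv_apply k _ _ c r]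
  calc ∑ i ∈ r.index, conv k f g (r.left i) * h (r.right i)
      = ∑ i ∈ r.index, ∑ j ∈ (t i).index,
          f ((t i).left j) * (g ((t i).right j) * h (r.right i)) := by
        refine Finset.sum_congr rfl fun i _ => ?_
        rw [conv_apply k _ _ _ (t i), Finset.sum_mul]
        exact Finset.sum_congr rfl fun j _ => (mul_assoc _ _ _)
    _ = ∑ i ∈ r.index, ∑ j ∈ (s i).index,
          f (r.left i) * (g ((s i).left j) * h ((s i).right j)) := key2
    _ = ∑ i ∈ r.index, f (r.left i) * conv k g h (r.right i) := by
        refine Finset.sum_congr rfl fun i _ => ?_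
        rw [conv_apply k _ _ _ (s i), Finset.mul_sum]


variable {H : Type} [Ring H] [HopfAlgebra k H]


/-- Product representation: `Δ(a*b)` from representations of `Δa`, `Δb`. -/
def mulRepr {ι κ : Type*} {a b : H} (ra : Coalgebra.Repr k a ι) (rb : Coalgebra.Repr k b κ) :
    Coalgebra.Repr k (a * b) (ι × κ) where
  index := ra.index ×ˢ rb.index
  left p := ra.left p.1 * rb.left p.2
  right p := ra.right p.1 * rb.right p.2
  eq := by
    rw [Bialgebra.comul_mul, ← ra.eq, ← rb.eq, Finset.sum_mul_sum]
    rw [Finset.sum_product]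
    simp [Algebra.TensorProduct.tmul_mul_tmul]

lemma antipode_one' : antipode (R := k) (1 : H) = 1 := by
  have := mul_antipode_rTensor_comul_apply (R := k) (1 : H)
  simpa [Bialgebra.comul_one, Algebra.TensorProduct.one_def] using this

/-- a ⊗ b ↦ S(ab) -/
def Fmap : H ⊗[k] H →ₗ[k] H := antipode (R := k) ∘ₗ LinearMap.mul' k H
/-- a ⊗ b ↦ S(b)S(a) -/
def Gmap : H ⊗[k] H →ₗ[k] H :=
  LinearMap.mul' k H ∘ₗ TensorProduct.map (antipode (R := k)) (antipode (R := k)) ∘ₗ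
    (TensorProduct.comm k H H).toLinearMap

lemma comul_tmul {ι κ : Type*} (a b : H) (ra : Coalgebra.Repr k a ι) (rb : Coalgebra.Repr k b κ) :
    Coalgebra.comul (R := k) (a ⊗ₜ[k] b) =
      ∑ i ∈ ra.index, ∑ j ∈ rb.index,
        (ra.left i ⊗ₜ[k] rb.left j) ⊗ₜ[k] (ra.right i ⊗ₜ[k] rb.right j) := by
  rw [TensorProduct.comul_tmul]
  rw [← ra.eq, ← rb.eq]
  simp only [TensorProduct.sum_tmul, TensorProduct.tmul_sum, map_sum, LinearEquiv.coe_coe,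
    TensorProduct.tensorTensorTensorComm_tmul, AlgebraTensorModule.tensorTensorTensorComm_tmul]
  rw [Finset.sum_comm]

lemma counit_tmul (a b : H) :
    Coalgebra.counit (R := k) (a ⊗ₜ[k] b) =
      Coalgebra.counit (R := k) a * Coalgebra.counit (R := k) b := by
  rw [TensorProduct.counit_tmul, smul_eq_mul, mul_comm]

lemma conv_tmul {ι κ : Type*} (f g : H ⊗[k] H →ₗ[k] H) (a b : H)
    (ra : Coalgebra.Repr k a ι) (rb : Coalgebra.Repr k b κ) :
    conv k f g (a ⊗ₜ[k] b) = ∑ i ∈ ra.index, ∑ j ∈ rb.index,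
      f (ra.left i ⊗ₜ[k] rb.left j) * g (ra.right i ⊗ₜ[k] rb.right j) := by
  simp only [conv, LinearMap.comp_apply]
  rw [comul_tmul k a b ra rb]
  simp [map_sum]

lemma conv_F_mul : conv k (Fmap k) (LinearMap.mul' k H) = convOne k := by
  refine TensorProduct.ext' fun a b => ?_
  have ra := Coalgebra.Repr.arbitrary k a
  have rb := Coalgebra.Repr.arbitrary k b
  rw [conv_tmul k _ _ a b ra rb]
  have key := sum_antipode_mul_eq_algebraMap_counit (R := k) (mulRepr k ra rb)
  simp only [mulRepr] at key
  rw [Finset.sum_product] at key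
  calc ∑ i ∈ ra.index, ∑ j ∈ rb.index,
        Fmap k (ra.left i ⊗ₜ[k] rb.left j) * LinearMap.mul' k H (ra.right i ⊗ₜ[k] rb.right j)
      = ∑ i ∈ ra.index, ∑ j ∈ rb.index,
        antipode (R := k) (ra.left i * rb.left j) * (ra.right i * rb.right j) := by
        simp [Fmap]
    _ = algebraMap k H (Coalgebra.counit (R := k) (a * b)) := key
    _ = convOne k (a ⊗ₜ[k] b) := by
        simp [convOne, counit_tmul, Bialgebra.counit_mul]
        exact Algebra.commutes _ _

lemma conv_mul_G : conv k (LinearMap.mul' k H) (Gmap k) = convOne k := by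
  refine TensorProduct.ext' fun a b => ?_
  have ra := Coalgebra.Repr.arbitrary k a
  have rb := Coalgebra.Repr.arbitrary k b
  rw [conv_tmul k _ _ a b ra rb]
  calc ∑ i ∈ ra.index, ∑ j ∈ rb.index,
        LinearMap.mul' k H (ra.left i ⊗ₜ[k] rb.left j) * Gmap k (ra.right i ⊗ₜ[k] rb.right j)
      = ∑ i ∈ ra.index, ∑ j ∈ rb.index,
        ra.left i * (rb.left j * antipode (R := k) (rb.right j)) * antipode (R := k) (ra.right i) := by
        refine Finset.sum_congr rfl fun i _ => Finset.sum_congr rfl fun j _ => ?_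
        simp only [Gmap, LinearMap.comp_apply, LinearEquiv.coe_coe, TensorProduct.comm_tmul,
          TensorProduct.map_tmul, LinearMap.mul'_apply]
        rw [mul_assoc, mul_assoc, mul_assoc]
    _ = ∑ i ∈ ra.index,
        ra.left i * algebraMap k H (Coalgebra.counit (R := k) b) * antipode (R := k) (ra.right i) := by
        refine Finset.sum_congr rfl fun i _ => ?_
        rw [← Finset.sum_mul, ← Finset.mul_sum, sum_mul_antipode_eq_algebraMap_counit (R := k) rb]
    _ = Coalgebra.counit (R := k) b • ∑ i ∈ ra.index, ra.left i * antipode (R := k) (ra.right i) := by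
        rw [Finset.smul_sum]
        refine Finset.sum_congr rfl fun i _ => ?_
        rw [← Algebra.commutes, mul_assoc, ← Algebra.smul_def]
    _ = convOne k (a ⊗ₜ[k] b) := by
        rw [sum_mul_antipode_eq_algebraMap_counit (R := k) ra]
        simp only [convOne, LinearMap.comp_apply, Algebra.linearMap_apply, counit_tmul k a b,
          map_mul, Algebra.smul_def]
        exact Algebra.commutes _ _


set_option maxHeartbeats 1000000 in
theorem antipode_mul' (a b : H) :
    antipode (R := k) (a * b) = antipode (R := k) b * antipode (R := k) a := by
  have h1 : conv k (Fmap k (H := H)) (convOne k) = Fmap k := conv_one_right k _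
  have h2 : conv k (convOne k) (Gmap k (H := H)) = Gmap k := conv_one_left k _
  have h3 : conv k (conv k (Fmap k (H := H)) (LinearMap.mul' k H)) (Gmap k) =
      conv k (Fmap k) (conv k (LinearMap.mul' k H) (Gmap k)) := conv_assoc k _ _ _
  have hFG : Fmap k = Gmap k (H := H) := by
    rw [← h1, ← conv_mul_G (k := k) (H := H), ← h3, conv_F_mul, h2]
  have := congrArg (fun φ : H ⊗[k] H →ₗ[k] H => φ (a ⊗ₜ[k] b)) hFG
  simpa [Fmap, Gmap] using this

end Stmt11Aux
end

noncomputable section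

variable (k : Type) [Field k]
variable (H : Type) [Ring H] [HopfAlgebra k H]
variable (W : Type) [AddCommGroup W] [Module k W]


section AuxLemmas

open Coalgebra HopfAlgebra Stmt11Aux

variable (k : Type) [Field k]
variable (H : Type) [Ring H] [HopfAlgebra k H]
variable (W : Type) [AddCommGroup W] [Module k W]

lemma sandwichHom_tmul (u v : H) (φ : H →ₗ[k] W) (x : H) :
    sandwichHom k H W (u ⊗ₜ[k] v) φ x = φ (u * (x * v)) := rfl

lemma evalMap_tmul (f : H →ₗ[k] W) (h : H) : evalMap k H W (f ⊗ₜ[k] h) = f h := rfl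

lemma hActW_apply {ι : Type*} (x : H) (r : Coalgebra.Repr k x ι) (f : H →ₗ[k] W) (h : H) :
    hActW k H W x f h = ∑ i ∈ r.index,
      f (HopfAlgebra.antipode (R := k) (r.right i) * (h * r.left i)) := by
  simp only [hActW, LinearMap.comp_apply]
  rw [← r.eq]
  simp only [map_sum, LinearEquiv.coe_coe, TensorProduct.comm_tmul, LinearMap.rTensor_tmul,
    LinearMap.sum_apply]
  exact Finset.sum_congr rfl fun i _ => sandwichHom_tmul k H W _ _ f h

lemma contra_apply (Φ : H →ₗ[k] (H →ₗ[k] W)) {ι : Type*} (h : H) (r : Coalgebra.Repr k h ι) :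
    contra k H W Φ h = ∑ i ∈ r.index, Φ (r.left i) (r.right i) := by
  have e : contra k H W Φ h =
      evalMap k H W (LinearMap.rTensor H Φ (Coalgebra.comul (R := k) h)) := rfl
  rw [e, ← r.eq]
  simp only [map_sum, LinearMap.rTensor_tmul]
  exact Finset.sum_congr rfl fun i _ => evalMap_tmul k H W _ _

/-- One-term representation of `Δ(1) = 1 ⊗ 1`. -/
def oneRepr : Coalgebra.Repr k (1 : H) Unit where
  index := {⟨⟩}
  left _ := 1
  right _ := 1
  eq := by simp [Bialgebra.comul_one, Algebra.TensorProduct.one_def]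

/-- `a ⊗ (b ⊗ c) ↦ f (S(b) * (c * a))`. -/
def psiMap (f : H →ₗ[k] W) : H ⊗[k] (H ⊗[k] H) →ₗ[k] W :=
  f ∘ₗ LinearMap.mul' k H ∘ₗ (LinearMap.mul' k H).lTensor H ∘ₗ
    (TensorProduct.assoc k H H H).toLinearMap ∘ₗ
    (TensorProduct.comm k H (H ⊗[k] H)).toLinearMap ∘ₗ
    ((HopfAlgebra.antipode (R := k)).rTensor H).lTensor H

lemma psiMap_tmul (f : H →ₗ[k] W) (a b c : H) :
    psiMap k H W f (a ⊗ₜ[k] (b ⊗ₜ[k] c)) =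
      f (HopfAlgebra.antipode (R := k) b * (c * a)) := rfl

end AuxLemmas

theorem stmt11 :
    -- (i) the formula defines a left `H`-module structure on `Hom_k(H, W)`
    ((∀ x y : H, hActW k H W (x * y) = hActW k H W x ∘ₗ hActW k H W y)
      ∧ hActW k H W 1 = LinearMap.id)
    -- (ii) stability: `α (h ↦ h · f) = f`
    ∧ (∀ f : H →ₗ[k] W, contra k H W ((hActW k H W).flip f) = f) := by
  refine ⟨⟨fun x y => ?_, ?_⟩, fun f => ?_⟩
  · -- multiplicativity
    ext f h
    have rx := Coalgebra.Repr.arbitrary k x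
    have ry := Coalgebra.Repr.arbitrary k y
    simp only [LinearMap.coe_comp, Function.comp_apply]
    rw [hActW_apply k H W (x * y) (Stmt11Aux.mulRepr k rx ry) f h,
      hActW_apply k H W x rx (hActW k H W y f) h]
    simp only [Stmt11Aux.mulRepr]
    rw [Finset.sum_product]
    refine Finset.sum_congr rfl fun i _ => ?_
    rw [hActW_apply k H W y ry f _]
    refine Finset.sum_congr rfl fun j _ => ?_
    rw [Stmt11Aux.antipode_mul' k]
    simp [mul_assoc]
  · -- unit
    ext f h
    rw [hActW_apply k H W 1 (oneRepr k H) f h]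
    simp [oneRepr, Stmt11Aux.antipode_one' k]
  · -- stability
    ext h
    have r := Coalgebra.Repr.arbitrary k h
    set t : (i : H × H) → Coalgebra.Repr k (r.left i) (H × H) := fun i => Coalgebra.Repr.arbitrary k _
    set s : (i : H × H) → Coalgebra.Repr k (r.right i) (H × H) := fun i => Coalgebra.Repr.arbitrary k _
    have key := congrArg (psiMap k H W f) (Coalgebra.sum_tmul_tmul_eq (R := k) r t s)
    simp only [map_sum, psiMap_tmul] at key
    rw [contra_apply k H W _ h r]
    calc ∑ i ∈ r.index, (hActW k H W).flip f (r.left i) (r.right i)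
        = ∑ i ∈ r.index, ∑ j ∈ (t i).index,
            f (HopfAlgebra.antipode (R := k) ((t i).right j) * (r.right i * (t i).left j)) := by
          refine Finset.sum_congr rfl fun i _ => ?_
          exact hActW_apply k H W (r.left i) (t i) f (r.right i)
      _ = ∑ i ∈ r.index, ∑ j ∈ (s i).index,
            f (HopfAlgebra.antipode (R := k) ((s i).left j) * ((s i).right j * r.left i)) := key
      _ = ∑ i ∈ r.index,
            f (Coalgebra.counit (R := k) (r.right i) • r.left i) := by
          refine Finset.sum_congr rfl fun i _ => ?_
          rw [← map_sum]
          congr 1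
          calc ∑ j ∈ (s i).index,
                HopfAlgebra.antipode (R := k) ((s i).left j) * ((s i).right j * r.left i)
              = (∑ j ∈ (s i).index,
                  HopfAlgebra.antipode (R := k) ((s i).left j) * (s i).right j) * r.left i := by
                rw [Finset.sum_mul]
                exact Finset.sum_congr rfl fun j _ => (mul_assoc _ _ _).symm
            _ = Coalgebra.counit (R := k) (r.right i) • r.left i := by
                rw [HopfAlgebra.sum_antipode_mul_eq_algebraMap_counit (R := k) (s i), ← Algebra.smul_def]
      _ = f h := by
          rw [← map_sum]
          congr 1
          exact Stmt11Aux.sum_smul_eq k h r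


end
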